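/- Let a < b be real numbers, let x_1, …, x_r be distinct points of [a,b] with positive integer multiplicities m_1, …, m_r, and suppose every x_i with m_i ≥ 2 lies in (a,b). Set h(x) = ∏_{i=1}^r (x − x_i)^{m_i} and n = deg h = ∑ m_i. Let f : ℝ → ℝ be continuous on [a,b] and n-times differentiable on (a,b), and let u, v be real polynomials with v(0) = 1 and deg u + deg v < n, such that the function f·v − u satisfies (f·v − u)^{(k)}(x_i) = 0 for every i ∈ {1,…,r} and every 0 ≤ k < m_i. Then for every x ∈ [a,b] with v(x) ≠ 0 there exists c ∈ (a,b) such that f(x) = u(x)/v(x) + (1/(n!·v(x))) · (f·v)^{(n)}(c) · h(x). -/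

import Mathlib

private lemma aux_shift (ψ : ℝ → ℝ) (k : ℕ) :
    iteratedDeriv k (deriv ψ) = iteratedDeriv (k + 1) ψ := (iteratedDeriv_succ' ..).symm

private lemma stepB (a b : ℝ) (ψ : ℝ → ℝ) (N : ℕ) :
    ∀ S : Multiset ℝ, S.card ≤ N →
    (∀ p ∈ S, ∀ q ∈ S, ContinuousOn ψ (Set.Icc p q)) →
    (∀ p ∈ S, p ∈ Set.Icc a b) →
    (∀ p ∈ S, 2 ≤ S.count p → p ∈ Set.Ioo a b) →
    (∀ p ∈ S, ∀ k < S.count p, iteratedDeriv k ψ p = 0) →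
    ∃ T : Multiset ℝ, T.card = S.card - 1 ∧ (∀ z ∈ T, z ∈ Set.Ioo a b) ∧
      (∀ z ∈ T, ∃ q ∈ S, z ≤ q) ∧
      (∀ z : ℝ, ∀ k < T.count z, iteratedDeriv k (deriv ψ) z = 0) := by
  induction N with
  | zero =>
    intro S hcard _ _ _ _
    have hS : S = 0 := Multiset.card_eq_zero.mp (Nat.le_zero.mp hcard)
    exact ⟨0, by simp [hS], by simp, by simp, by simp⟩
  | succ N ih =>
    intro S hcard hc hIcc hmu hz
    rcases eq_or_ne S 0 with rfl | hS0
    · exact ⟨0, by simp, by simp, by simp, by simp⟩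
    have hSF : S.toFinset.Nonempty := by
      simpa [Multiset.toFinset_nonempty] using hS0
    set y := S.toFinset.max' hSF with hy
    have hyS : y ∈ S := Multiset.mem_toFinset.mp (S.toFinset.max'_mem hSF)
    have hmax : ∀ w ∈ S, w ≤ y := fun w hw => S.toFinset.le_max' w (Multiset.mem_toFinset.mpr hw)
    set m := S.count y with hm
    have hm1 : 1 ≤ m := Multiset.one_le_count_iff_mem.mpr hyS
    set S' := S.filter (· ≠ y) with hS'
    have hcount' : ∀ w : ℝ, w ≠ y → S'.count w = S.count w := by
      intro w hw; rw [hS', Multiset.count_filter]; simp [hw]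
    have hcounty' : S'.count y = 0 := by rw [hS', Multiset.count_filter]; simp
    have hmemS' : ∀ w ∈ S', w ∈ S ∧ w ≠ y := fun w hw =>
      ⟨Multiset.mem_of_mem_filter hw, (Multiset.mem_filter.mp hw).2⟩
    have hsplit : S' + Multiset.replicate m y = S := by
      have h1 : S.filter (fun w => ¬ w ≠ y) = Multiset.replicate m y := by
        simp only [ne_eq, not_not]
        exact Multiset.filter_eq' S y
      rw [hS', ← h1]
      exact Multiset.filter_add_not _ S
    have hcards : S'.card + m = S.card := by
      rw [← hsplit]; simp
    rcases eq_or_ne S' 0 with hS'0 | hS'ne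
    · -- all elements equal y
      have hSrep : S = Multiset.replicate m y := by rw [← hsplit, hS'0]; simp
      have hmcard : m = S.card := by rw [hSrep]; simp
      refine ⟨Multiset.replicate (m - 1) y, by simp [hmcard], ?_, ?_, ?_⟩
      · intro z hzT
        obtain ⟨hne, rfl⟩ := Multiset.mem_replicate.mp hzT
        exact hmu y hyS (by omega)
      · intro z hzT
        obtain ⟨_, rfl⟩ := Multiset.mem_replicate.mp hzT
        exact ⟨y, hyS, le_rfl⟩
      · intro z k hk
        rw [Multiset.count_replicate] at hk
        by_cases hzy : y = z
        · subst hzy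
          rw [if_pos rfl] at hk
          rw [aux_shift]
          exact hz y hyS (k + 1) (by omega)
        · rw [if_neg hzy] at hk; omega
    · -- at least two distinct values
      have hS'F : S'.toFinset.Nonempty := by simpa [Multiset.toFinset_nonempty] using hS'ne
      set y' := S'.toFinset.max' hS'F with hy'
      have hy'S' : y' ∈ S' := Multiset.mem_toFinset.mp (S'.toFinset.max'_mem hS'F)
      have hmax' : ∀ w ∈ S', w ≤ y' := fun w hw =>
        S'.toFinset.le_max' w (Multiset.mem_toFinset.mpr hw)
      obtain ⟨hy'S, hy'ne⟩ := hmemS' y' hy'S'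
      have hy'lt : y' < y := lt_of_le_of_ne (hmax y' hy'S) hy'ne
      have hψy' : ψ y' = 0 := by
        have := hz y' hy'S 0 (Multiset.count_pos.mpr hy'S)
        simpa using this
      have hψy : ψ y = 0 := by
        have := hz y hyS 0 (Multiset.count_pos.mpr hyS)
        simpa using this
      obtain ⟨z, hzIoo, hdz⟩ := exists_deriv_eq_zero hy'lt (hc y' hy'S y hyS)
        (by rw [hψy', hψy])
      have hS'card : 0 < S'.card := Multiset.card_pos.mpr hS'ne
      obtain ⟨T', hT'card, hT'Ioo, hT'bd, hT'z⟩ := ih S' (by omega)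
        (fun p hp q hq => hc p (hmemS' p hp).1 q (hmemS' q hq).1)
        (fun p hp => hIcc p (hmemS' p hp).1)
        (fun p hp h2 => hmu p (hmemS' p hp).1 (by rw [← hcount' p (hmemS' p hp).2]; exact h2))
        (fun p hp k hk => hz p (hmemS' p hp).1 k (by rw [← hcount' p (hmemS' p hp).2]; exact hk))
      have hT'le : ∀ w ∈ T', w ≤ y' := fun w hw => by
        obtain ⟨qq, hqq, hle⟩ := hT'bd w hw
        exact hle.trans (hmax' qq hqq)
      have hzT' : T'.count z = 0 := Multiset.count_eq_zero.mpr
        (fun hmem => absurd (hT'le z hmem) (not_le.mpr hzIoo.1))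
      have hyT' : T'.count y = 0 := Multiset.count_eq_zero.mpr
        (fun hmem => absurd (hT'le y hmem) (not_le.mpr hy'lt))
      have hzy : z < y := hzIoo.2
      have haz : a < z := lt_of_le_of_lt (hIcc y' hy'S).1 hzIoo.1
      have hzb : z < b := lt_of_lt_of_le hzy (hIcc y hyS).2
      refine ⟨z ::ₘ (Multiset.replicate (m - 1) y + T'), ?_, ?_, ?_, ?_⟩
      · simp only [Multiset.card_cons, Multiset.card_add, Multiset.card_replicate]
        omega
      · intro w hw
        rcases Multiset.mem_cons.mp hw with rfl | hw
        · exact ⟨haz, hzb⟩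
        rcases Multiset.mem_add.mp hw with hw | hw
        · obtain ⟨hne, rfl⟩ := Multiset.mem_replicate.mp hw
          exact hmu _ hyS (by omega)
        · exact hT'Ioo w hw
      · intro w hw
        rcases Multiset.mem_cons.mp hw with rfl | hw
        · exact ⟨y, hyS, hzy.le⟩
        rcases Multiset.mem_add.mp hw with hw | hw
        · obtain ⟨_, rfl⟩ := Multiset.mem_replicate.mp hw
          exact ⟨_, hyS, le_rfl⟩
        · obtain ⟨qq, hqq, hle⟩ := hT'bd w hw
          exact ⟨qq, (hmemS' qq hqq).1, hle⟩
      · intro w k hk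
        have hyz : y ≠ z := fun h => absurd h.symm (ne_of_lt hzy)
        rw [Multiset.count_cons, Multiset.count_add, Multiset.count_replicate] at hk
        by_cases hwz : w = z
        · rw [if_neg (fun h => hyz (h.trans hwz)), if_pos hwz] at hk
          have h2 : Multiset.count w T' = 0 := by rw [hwz]; exact hzT'
          rw [h2] at hk
          have hk0 : k = 0 := by omega
          subst hk0
          rw [hwz]
          simpa using hdz
        · by_cases hwy : w = y
          · rw [if_pos hwy.symm, if_neg hwz] at hk
            have h2 : Multiset.count w T' = 0 := by rw [hwy]; exact hyT'
            rw [h2] at hk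
            rw [aux_shift, hwy]
            exact hz y hyS (k + 1) (by omega)
          · rw [if_neg (fun h => hwy h.symm), if_neg hwz] at hk
            exact hT'z w k (by omega)

private lemma iterA (a b : ℝ) : ∀ (n : ℕ) (ψ : ℝ → ℝ),
    (∀ k < n, DifferentiableOn ℝ (iteratedDeriv k ψ) (Set.Ioo a b)) →
    ∀ S : Multiset ℝ, S.card = n + 1 → (∀ p ∈ S, p ∈ Set.Ioo a b) →
    (∀ p ∈ S, ∀ k < S.count p, iteratedDeriv k ψ p = 0) →
    ∃ c ∈ Set.Ioo a b, iteratedDeriv n ψ c = 0 := by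
  intro n
  induction n with
  | zero =>
    intro ψ _ S hcard hmem hz
    obtain ⟨p, hp⟩ := Multiset.card_pos_iff_exists_mem.mp (by rw [hcard]; exact Nat.succ_pos 0)
    exact ⟨p, hmem p hp, by simpa using hz p hp 0 (Multiset.count_pos.mpr hp)⟩
  | succ n ih =>
    intro ψ hd S hcard hmem hz
    have hd0 : DifferentiableOn ℝ ψ (Set.Ioo a b) := by
      simpa using hd 0 (Nat.succ_pos n)
    obtain ⟨T, hTcard, hTIoo, _, hTz⟩ := stepB a b ψ S.card S le_rfl
      (fun p hp q hq => hd0.continuousOn.mono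
        (fun t ht => ⟨lt_of_lt_of_le (hmem p hp).1 ht.1, lt_of_le_of_lt ht.2 (hmem q hq).2⟩))
      (fun p hp => Set.Ioo_subset_Icc_self (hmem p hp))
      (fun p hp _ => hmem p hp) hz
    obtain ⟨c, hc, h0⟩ := ih (deriv ψ)
      (fun k hk => by rw [aux_shift]; exact hd (k + 1) (by omega))
      T (by omega) hTIoo (fun p _ k hk => hTz p k hk)
    exact ⟨c, hc, by rw [← aux_shift]; exact h0⟩

private lemma iterA0 (a b : ℝ) (g : ℝ → ℝ) (n : ℕ) (hn : 1 ≤ n)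
    (hcont : ContinuousOn g (Set.Icc a b))
    (hd : ∀ k < n, DifferentiableOn ℝ (iteratedDeriv k g) (Set.Ioo a b))
    (S : Multiset ℝ) (hcard : S.card = n + 1)
    (hIcc : ∀ p ∈ S, p ∈ Set.Icc a b)
    (hmu : ∀ p ∈ S, 2 ≤ S.count p → p ∈ Set.Ioo a b)
    (hz : ∀ p ∈ S, ∀ k < S.count p, iteratedDeriv k g p = 0) :
    ∃ c ∈ Set.Ioo a b, iteratedDeriv n g c = 0 := by
  obtain ⟨n', rfl⟩ : ∃ n', n = n' + 1 := ⟨n - 1, by omega⟩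
  obtain ⟨T, hTcard, hTIoo, _, hTz⟩ := stepB a b g S.card S le_rfl
    (fun p hp q hq => hcont.mono
      (fun t ht => ⟨le_trans (hIcc p hp).1 ht.1, le_trans ht.2 (hIcc q hq).2⟩))
    hIcc hmu hz
  obtain ⟨c, hc, h0⟩ := iterA a b n' (deriv g)
    (fun k hk => by rw [aux_shift]; exact hd (k + 1) (by omega))
    T (by omega) hTIoo (fun p _ k hk => hTz p k hk)
  exact ⟨c, hc, by rw [← aux_shift]; exact h0⟩

open Polynomial in
private lemma key_repr (a b : ℝ) (f : ℝ → ℝ) (n : ℕ)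
    (hf : ∀ k < n, DifferentiableOn ℝ (iteratedDeriv k f) (Set.Ioo a b))
    (V : Polynomial ℝ) :
    ∀ k ≤ n, ∃ coef : ℕ → Polynomial ℝ,
      Set.EqOn (iteratedDeriv k (fun t => f t * V.eval t))
        (fun t => ∑ j ∈ Finset.range (k + 1), iteratedDeriv j f t * (coef j).eval t)
        (Set.Ioo a b) := by
  intro k
  induction k with
  | zero =>
    intro _
    exact ⟨fun _ => V, fun t _ => by simp⟩
  | succ k ihk =>
    intro hk1
    obtain ⟨coef, hcoef⟩ := ihk (by omega)
    refine ⟨fun j => (if j = 0 then 0 else coef (j - 1)) +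
      (if j ≤ k then derivative (coef j) else 0), ?_⟩
    intro t ht
    have hopen : Set.Ioo a b ∈ nhds t := isOpen_Ioo.mem_nhds ht
    have hdiffAt : ∀ j < n, DifferentiableAt ℝ (iteratedDeriv j f) t := fun j hj =>
      (hf j hj).differentiableAt hopen
    have hstep : iteratedDeriv (k + 1) (fun t => f t * V.eval t) t
        = deriv (fun t => ∑ j ∈ Finset.range (k + 1),
            iteratedDeriv j f t * (coef j).eval t) t := by
      rw [iteratedDeriv_succ]
      exact Filter.EventuallyEq.deriv_eq (Filter.eventuallyEq_of_mem hopen hcoef)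
    have hderivsum : deriv (fun t => ∑ j ∈ Finset.range (k + 1),
          iteratedDeriv j f t * (coef j).eval t) t
        = ∑ j ∈ Finset.range (k + 1), (iteratedDeriv (j + 1) f t * (coef j).eval t
            + iteratedDeriv j f t * (derivative (coef j)).eval t) := by
      rw [deriv_fun_sum (u := Finset.range (k + 1)) (fun j hj => ((hdiffAt j (by
        have := Finset.mem_range.mp hj; omega)).fun_mul (Polynomial.differentiableAt _)))]
      refine Finset.sum_congr rfl fun j hj => ?_
      rw [deriv_fun_mul (hdiffAt j (by have := Finset.mem_range.mp hj; omega))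
        (Polynomial.differentiableAt _)]
      rw [← iteratedDeriv_succ, Polynomial.deriv]
    have hRHS : ∑ j ∈ Finset.range (k + 2), iteratedDeriv j f t *
          ((if j = 0 then 0 else coef (j - 1)) +
            (if j ≤ k then derivative (coef j) else 0)).eval t
        = ∑ j ∈ Finset.range (k + 1), (iteratedDeriv (j + 1) f t * (coef j).eval t
            + iteratedDeriv j f t * (derivative (coef j)).eval t) := by
      simp only [Polynomial.eval_add, mul_add, Finset.sum_add_distrib]
      congr 1
      · rw [Finset.sum_range_succ' (fun j => iteratedDeriv j f t *
          (if j = 0 then (0 : Polynomial ℝ) else coef (j - 1)).eval t) (k + 1)]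
        simp
      · rw [Finset.sum_range_succ]
        rw [Finset.sum_congr rfl (fun j hj => by
          rw [if_pos (Nat.lt_succ_iff.mp (Finset.mem_range.mp hj))] :
            ∀ j ∈ Finset.range (k + 1), iteratedDeriv j f t *
              (if j ≤ k then derivative (coef j) else 0).eval t
              = iteratedDeriv j f t * (derivative (coef j)).eval t)]
        simp
    show iteratedDeriv (k + 1) (fun t => f t * V.eval t) t = _
    rw [hstep, hderivsum, ← hRHS]

open Polynomial in
private lemma key_diff (a b : ℝ) (f : ℝ → ℝ) (n : ℕ)
    (hf : ∀ k < n, DifferentiableOn ℝ (iteratedDeriv k f) (Set.Ioo a b))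
    (V : Polynomial ℝ) :
    ∀ k < n, DifferentiableOn ℝ (iteratedDeriv k (fun t => f t * V.eval t))
      (Set.Ioo a b) := by
  intro k hk
  obtain ⟨coef, hcoef⟩ := key_repr a b f n hf V k hk.le
  refine DifferentiableOn.congr ?_ hcoef
  exact DifferentiableOn.fun_sum fun j hj =>
    (hf j (by have := Finset.mem_range.mp hj; omega)).mul
      (Polynomial.differentiable _).differentiableOn

open Polynomial in
private lemma key_sub (a b : ℝ) (f : ℝ → ℝ) (n : ℕ)
    (hf : ∀ k < n, DifferentiableOn ℝ (iteratedDeriv k f) (Set.Ioo a b))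
    (V q : Polynomial ℝ) :
    ∀ k ≤ n, ∀ t ∈ Set.Ioo a b,
      iteratedDeriv k (fun t => f t * V.eval t - q.eval t) t
        = iteratedDeriv k (fun t => f t * V.eval t) t - (derivative^[k] q).eval t := by
  intro k
  induction k with
  | zero => intro _ t _; simp
  | succ k ih =>
    intro hk1 t ht
    have hopen : Set.Ioo a b ∈ nhds t := isOpen_Ioo.mem_nhds ht
    have hEq : Set.EqOn (iteratedDeriv k (fun t => f t * V.eval t - q.eval t))
        (fun t => iteratedDeriv k (fun t => f t * V.eval t) t - (derivative^[k] q).eval t)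
        (Set.Ioo a b) := fun s hs => ih (by omega) s hs
    rw [iteratedDeriv_succ,
      Filter.EventuallyEq.deriv_eq (Filter.eventuallyEq_of_mem hopen hEq),
      deriv_fun_sub ((key_diff a b f n hf V k (by omega)).differentiableAt hopen)
        (Polynomial.differentiableAt _),
      ← iteratedDeriv_succ, Polynomial.deriv, ← Function.iterate_succ_apply' derivative k q]

open Polynomial in
private lemma iterate_derivative_combo (k : ℕ) (u H : Polynomial ℝ) (c : ℝ) :
    derivative^[k] (u + c • H) = derivative^[k] u + c • derivative^[k] H := by
  induction k with
  | zero => simp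
  | succ k ihk =>
    rw [Function.iterate_succ_apply', ihk, derivative_add, derivative_smul,
      ← Function.iterate_succ_apply' (⇑derivative) k u,
      ← Function.iterate_succ_apply' (⇑derivative) k H]

open Polynomial in
/-- **Rational Approximation Theorem.**
Let `u, v` be real polynomials with `v 0 = 1` and `deg u + deg v < n`, where
`h t = ∏ i, (t - x i) ^ m i` has degree `n = ∑ i, m i` at distinct nodes `x i ∈ [a,b]`
(nodes of multiplicity `≥ 2` lying in `(a,b)`). If `f` is continuous on `[a,b]`,
`n`-times differentiable on `(a,b)`, and `f·v - u` vanishes to order `m i` at each `x i`,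
then for every `x ∈ [a,b]` with `v x ≠ 0` there is `c ∈ (a,b)` with
`f x = u x / v x + (1 / (n! * v x)) * (f·v)^{(n)}(c) * h x`. -/
theorem rational_approximation (a b : ℝ) (hab : a < b) (r : ℕ)
    (x : Fin r → ℝ) (hx : Function.Injective x)
    (hxI : ∀ i, x i ∈ Set.Icc a b)
    (m : Fin r → ℕ) (hm : ∀ i, 1 ≤ m i)
    (hmult : ∀ i, 2 ≤ m i → x i ∈ Set.Ioo a b)
    (h : ℝ → ℝ) (hh : h = fun t => ∏ i, (t - x i) ^ m i)
    (n : ℕ) (hn : n = ∑ i, m i)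
    (f : ℝ → ℝ) (hf_cont : ContinuousOn f (Set.Icc a b))
    (hf_diff : ∀ k < n, DifferentiableOn ℝ (iteratedDeriv k f) (Set.Ioo a b))
    (u v : Polynomial ℝ) (hv0 : v.eval 0 = 1)
    (hdeg : u.natDegree + v.natDegree < n)
    (hinterp : ∀ i, ∀ k < m i,
      iteratedDeriv k (fun t => f t * v.eval t - u.eval t) (x i) = 0) :
    ∀ x₀ ∈ Set.Icc a b, v.eval x₀ ≠ 0 → ∃ c ∈ Set.Ioo a b,
      f x₀ = u.eval x₀ / v.eval x₀ +
        1 / ((n.factorial : ℝ) * v.eval x₀) *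
          iteratedDeriv n (fun t => f t * v.eval t) c * h x₀ := by
  intro x₀ hx₀ hvx₀
  have hn1 : 1 ≤ n := by omega
  set H : Polynomial ℝ := ∏ i, (X - C (x i)) ^ m i with hH
  have hHeval : ∀ t, H.eval t = h t := by
    intro t; rw [hh, hH]; simp [Polynomial.eval_prod]
  have hHmonic : H.Monic := monic_prod_of_monic _ _ fun i _ => (monic_X_sub_C _).pow _
  have hHne : H ≠ 0 := hHmonic.ne_zero
  have hHdeg : H.natDegree = n := by
    rw [hH, Polynomial.natDegree_prod _ _ (fun i _ => pow_ne_zero _ (X_sub_C_ne_zero _)), hn]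
    simp [Polynomial.natDegree_pow, Polynomial.natDegree_X_sub_C]
  have hHroot : ∀ i, ∀ k < m i, (derivative^[k] H).eval (x i) = 0 := by
    intro i k hk
    have hdvd : (X - C (x i)) ^ m i ∣ H := Finset.dvd_prod_of_mem _ (Finset.mem_univ i)
    have hle : m i ≤ H.rootMultiplicity (x i) :=
      (Polynomial.le_rootMultiplicity_iff hHne).mpr hdvd
    exact Polynomial.isRoot_iterate_derivative_of_lt_rootMultiplicity (lt_of_lt_of_le hk hle)
  have hHn : derivative^[n] H = C ((n.factorial : ℝ)) := by
    have hdeg0 : (derivative^[n] H).natDegree = 0 := by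
      have h1 := Polynomial.natDegree_iterate_derivative H n
      rw [hHdeg] at h1
      omega
    rw [Polynomial.eq_C_of_natDegree_eq_zero hdeg0]
    congr 1
    rw [Polynomial.coeff_iterate_derivative]
    simp only [Nat.zero_add]
    rw [show H.coeff n = 1 by
      have := hHmonic.coeff_natDegree; rwa [hHdeg] at this]
    rw [Nat.descFactorial_self]
    simp
  have hude : derivative^[n] u = 0 :=
    Polynomial.iterate_derivative_eq_zero (by omega)
  by_cases hcase : h x₀ = 0
  · obtain ⟨i, _, hfac⟩ : ∃ i ∈ Finset.univ, (x₀ - x i) ^ m i = 0 := by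
      rw [hh] at hcase
      exact Finset.prod_eq_zero_iff.mp hcase
    have hxi : x₀ = x i := by
      have := pow_eq_zero_iff (Nat.one_le_iff_ne_zero.mp (hm i)) |>.mp hfac
      linarith [sub_eq_zero.mp this]
    have hg0 : f x₀ * v.eval x₀ - u.eval x₀ = 0 := by
      have := hinterp i 0 (hm i)
      rw [← hxi] at this
      simpa using this
    refine ⟨(a + b) / 2, ⟨by linarith, by linarith⟩, ?_⟩
    rw [hcase, mul_zero, add_zero]
    field_simp
    linarith [hg0]
  · -- main case
    have hx0ne : ∀ i, x₀ ≠ x i := by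
      intro i he
      apply hcase
      rw [hh]
      refine Finset.prod_eq_zero (Finset.mem_univ i) ?_
      rw [he, sub_self]
      exact zero_pow (Nat.one_le_iff_ne_zero.mp (hm i))
    set C₀ : ℝ := (f x₀ * v.eval x₀ - u.eval x₀) / h x₀ with hC₀
    set q : Polynomial ℝ := u + C₀ • H with hq
    have hqeval : ∀ t, q.eval t = u.eval t + C₀ * H.eval t := by
      intro t; rw [hq]; simp [Polynomial.eval_smul, smul_eq_mul]
    set S₀ : Multiset ℝ := ∑ i, Multiset.replicate (m i) (x i) with hS₀
    have hcard₀ : S₀.card = n := by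
      rw [hS₀, hn]
      induction (Finset.univ : Finset (Fin r)) using Finset.induction with
      | empty => simp
      | insert hni ih => simp_all [Finset.sum_insert]
    have hcount₀ : ∀ w, S₀.count w = ∑ i, if x i = w then m i else 0 := by
      intro w
      rw [hS₀, Multiset.count_sum']
      exact Finset.sum_congr rfl fun i _ => Multiset.count_replicate _ _ _
    have hcountxi : ∀ i, S₀.count (x i) = m i := by
      intro i
      rw [hcount₀, Finset.sum_eq_single_of_mem i (Finset.mem_univ i)
        (fun j _ hj => if_neg fun e => hj (hx e)), if_pos rfl]
    have hcountx₀ : S₀.count x₀ = 0 := by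
      rw [hcount₀, Finset.sum_eq_zero]
      intro i _
      exact if_neg fun e => (hx0ne i) e.symm
    have hmem₀ : ∀ w ∈ S₀, ∃ i, w = x i := by
      intro w hw
      rw [hS₀] at hw
      obtain ⟨i, _, hw⟩ := Multiset.mem_sum.mp hw
      exact ⟨i, (Multiset.eq_of_mem_replicate hw)⟩
    set S : Multiset ℝ := x₀ ::ₘ S₀ with hS
    have hScount₀ : S.count x₀ = 1 := by
      rw [hS, Multiset.count_cons_self, hcountx₀]
    have hScountxi : ∀ i, S.count (x i) = m i := by
      intro i
      rw [hS, Multiset.count_cons_of_ne (fun e => hx0ne i e.symm), hcountxi]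
    have hmemS : ∀ w ∈ S, w = x₀ ∨ ∃ i, w = x i := by
      intro w hw
      rcases Multiset.mem_cons.mp hw with h' | h'
      · exact Or.inl h'
      · exact Or.inr (hmem₀ w h')
    have hScard : S.card = n + 1 := by rw [hS, Multiset.card_cons, hcard₀]
    have hSIcc : ∀ p ∈ S, p ∈ Set.Icc a b := by
      intro p hp
      rcases hmemS p hp with rfl | ⟨i, rfl⟩
      · exact hx₀
      · exact hxI i
    have hSmu : ∀ p ∈ S, 2 ≤ S.count p → p ∈ Set.Ioo a b := by
      intro p hp h2
      rcases hmemS p hp with rfl | ⟨i, rfl⟩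
      · rw [hScount₀] at h2; omega
      · rw [hScountxi i] at h2; exact hmult i h2
    have hmin : ∀ i, m i ≤ n := by
      intro i
      rw [hn]
      exact Finset.single_le_sum (f := m) (fun j _ => Nat.zero_le _) (Finset.mem_univ i)
    -- vanishing of φ := f·v - q at S
    have hφz : ∀ p ∈ S, ∀ k < S.count p,
        iteratedDeriv k (fun t => f t * v.eval t - q.eval t) p = 0 := by
      intro p hp k hk
      rcases hmemS p hp with rfl | ⟨i, rfl⟩
      · rw [hScount₀] at hk
        have hk0 : k = 0 := by omega
        subst hk0
        simp only [iteratedDeriv_zero]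
        rw [hqeval, hHeval, hC₀]
        field_simp
        ring
      · rw [hScountxi i] at hk
        rcases Nat.eq_zero_or_pos k with hk0 | hkpos
        · subst hk0
          simp only [iteratedDeriv_zero]
          have hg0 : f (x i) * v.eval (x i) - u.eval (x i) = 0 := by
            simpa using hinterp i 0 (hm i)
          have hH0 : H.eval (x i) = 0 := by
            simpa using hHroot i 0 (hm i)
          rw [hqeval, hH0]
          linarith [hg0]
        · have hIoo : x i ∈ Set.Ioo a b := hmult i (by omega)
          have hkn : k ≤ n := le_trans hk.le (hmin i)
          have e1 := key_sub a b f n hf_diff v q k hkn (x i) hIoo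
          have e2 := key_sub a b f n hf_diff v u k hkn (x i) hIoo
          have e3 : iteratedDeriv k (fun t => f t * v.eval t - u.eval t) (x i) = 0 :=
            hinterp i k hk
          have e4 : (derivative^[k] q).eval (x i)
              = (derivative^[k] u).eval (x i) + C₀ * (derivative^[k] H).eval (x i) := by
            rw [hq, iterate_derivative_combo]
            simp [Polynomial.eval_smul, smul_eq_mul]
          have e5 : (derivative^[k] H).eval (x i) = 0 := hHroot i k hk
          rw [e1, e4, e5, mul_zero, add_zero]
          rw [e3] at e2
          linarith [e2]
    -- differentiability of φ
    have hφdiff : ∀ k < n, DifferentiableOn ℝ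
        (iteratedDeriv k (fun t => f t * v.eval t - q.eval t)) (Set.Ioo a b) := by
      intro k hk
      refine DifferentiableOn.congr
        ((key_diff a b f n hf_diff v k hk).sub
          (Polynomial.differentiable _).differentiableOn)
        (fun t ht => key_sub a b f n hf_diff v q k hk.le t ht)
    have hφcont : ContinuousOn (fun t => f t * v.eval t - q.eval t) (Set.Icc a b) :=
      (hf_cont.mul (Polynomial.continuous v).continuousOn).sub
        (Polynomial.continuous q).continuousOn
    obtain ⟨c, hc, hφn⟩ := iterA0 a b (fun t => f t * v.eval t - q.eval t) n hn1
      hφcont hφdiff S hScard hSIcc hSmu hφz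
    have e1 := key_sub a b f n hf_diff v q n le_rfl c hc
    rw [hφn] at e1
    have hqn : (derivative^[n] q).eval c = C₀ * (n.factorial : ℝ) := by
      rw [hq, iterate_derivative_combo, hude, hHn]
      simp [Polynomial.eval_smul, smul_eq_mul]
    have hFn : iteratedDeriv n (fun t => f t * v.eval t) c = C₀ * (n.factorial : ℝ) := by
      rw [hqn] at e1
      linarith
    have hfact : (n.factorial : ℝ) ≠ 0 := Nat.cast_ne_zero.mpr n.factorial_ne_zero
    refine ⟨c, hc, ?_⟩
    rw [hFn, hC₀]
    field_simp
    ring
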